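/- Let Π_1,...,Π_K be exchangeable [0,1]-valued random variables each marginally Uniform(0,1). Then for all t ∈ (0,1), P(∃ k ≤ K : (1/k)∑_{i=1}^k Π_i ≤ t) ≤ 1/(2(1-t)). -/

import Mathlib

open MeasureTheory Set

open Finset

/-- Cycle-lemma / rising-sun core: for a nonnegative `K`-periodic sequence `x`,
the number of "good" starting points `j < K` (those from which some window of
length `k ∈ [1,K]` has average `≥ a`) satisfies `a * #good ≤ ∑_{i<K} x i`. -/
theorem cycle_key (K : ℕ) (hK : 0 < K) (a : ℝ) (ha : 0 < a)
    (x : ℕ → ℝ) (hx : ∀ m, 0 ≤ x m) (hper : ∀ m, x (m + K) = x m)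
    (good : ℕ → Prop) [DecidablePred good]
    (hgood : ∀ j, good j ↔ ∃ k ∈ Finset.Icc 1 K, a * k ≤ ∑ i ∈ Finset.Ico j (j+k), x i) :
    a * ((Finset.range K).filter good).card ≤ ∑ i ∈ Finset.range K, x i := by
  set S : ℝ := ∑ i ∈ Finset.range K, x i with hS
  by_cases hcase : a * K ≤ S
  · calc a * ((Finset.range K).filter good).card
        ≤ a * K := by
          have := Finset.card_filter_le (Finset.range K) good
          have hK' : (((Finset.range K).filter good).card : ℝ) ≤ (K : ℝ) := by
            exact_mod_cast (Finset.card_range K ▸ this)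
          nlinarith
      _ ≤ S := hcase
  push_neg at hcase
  -- partial sums minus drift
  set T : ℕ → ℝ := fun m => (∑ i ∈ Finset.range m, x i) - a * m with hT
  set d : ℝ := S - a * K with hd
  have hdneg : d < 0 := by simp [hd]; linarith
  -- period-sum fact
  have hwin : ∀ m, ∑ i ∈ Finset.range K, x (m + i) = S := by
    intro m
    induction m with
    | zero => simp [hS]
    | succ n ih =>
      have h1 : ∑ i ∈ Finset.range K, x (n + 1 + i) = ∑ i ∈ Finset.range K, x (n + (i+1)) := by
        apply Finset.sum_congr rfl; intro i _; ring_nf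
      have h2 : ∑ i ∈ Finset.range K, x (n + (i+1))
          = (∑ i ∈ Finset.range K, x (n + i)) + x (n + K) - x (n + 0) := by
        have := Finset.sum_range_succ' (fun i => x (n + i)) K
        have := Finset.sum_range_succ (fun i => x (n + i)) K
        -- ∑_{i<K+1} f i = ∑_{i<K} f (i+1) + f 0 and = ∑_{i<K} f i + f K
        have e1 : ∑ i ∈ Finset.range (K+1), x (n+i)
            = (∑ i ∈ Finset.range K, x (n + (i+1))) + x (n + 0) :=
          Finset.sum_range_succ' (fun i => x (n + i)) K
        have e2 : ∑ i ∈ Finset.range (K+1), x (n+i)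
            = (∑ i ∈ Finset.range K, x (n + i)) + x (n + K) :=
          Finset.sum_range_succ (fun i => x (n + i)) K
        linarith [e1, e2]
      rw [h1, h2, hper n]
      simp only [Nat.add_zero]
      linarith [ih]
  have hTper : ∀ m, T (m + K) = T m + d := by
    intro m
    have : ∑ i ∈ Finset.range (m + K), x i
        = (∑ i ∈ Finset.range m, x i) + ∑ i ∈ Finset.range K, x (m + i) := by
      rw [Finset.sum_range_add]
    simp only [hT, this, hwin m, hd]
    push_cast; ring
  -- the running maximum
  set U : ℕ → ℝ := fun j => (Finset.Icc j (j+K)).sup' (by simp) T with hU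
  have hmemU : ∀ j m, j ≤ m → m ≤ j + K → T m ≤ U j := by
    intro j m h1 h2
    exact Finset.le_sup' T (by simp [Finset.mem_Icc]; omega)
  have hUle : ∀ j (c : ℝ), (∀ m, j ≤ m → m ≤ j + K → T m ≤ c) → U j ≤ c := by
    intro j c h
    apply Finset.sup'_le
    intro m hm
    simp [Finset.mem_Icc] at hm
    exact h m hm.1 hm.2
  -- U dominates all future values
  have hUge : ∀ j n m, m ≤ j + K + n → j ≤ m → T m ≤ U j := by
    intro j n
    induction n with
    | zero => intro m h1 h2; exact hmemU j m h2 (by omega)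
    | succ n ih =>
      intro m h1 h2
      by_cases hm : m ≤ j + K + n
      · exact ih m hm h2
      · have hmK : K ≤ m := by omega
        have : T m = T (m - K) + d := by
          have := hTper (m - K)
          rw [Nat.sub_add_cancel hmK] at this
          linarith
        have h3 : T (m - K) ≤ U j := ih (m - K) (by omega) (by omega)
        linarith
  have hUge' : ∀ j m, j ≤ m → T m ≤ U j := fun j m h =>
    hUge j m m (by omega) h
  -- U is (weakly) decreasing with controlled descents
  have hdesc : ∀ j, U j ≤ U (j+1) + a := by
    intro j
    apply hUle
    intro m h1 h2
    rcases Nat.eq_or_lt_of_le h1 with rfl | h1'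
    · have h3 : T (j+1) ≤ U (j+1) := hUge' (j+1) (j+1) le_rfl
      have h4 : T (j+1) = T j + x j - a * 1 := by
        simp only [hT, Finset.sum_range_succ]; push_cast; ring
      have := hx j
      linarith
    · have := hUge' (j+1) m h1'
      linarith
  have hdesc0 : ∀ j, good j → U j ≤ U (j+1) := by
    intro j hj
    obtain ⟨k, hk, hks⟩ := (hgood j).1 hj
    simp only [Finset.mem_Icc] at hk
    -- T (j+k) ≥ T j
    have hTjk : T j ≤ T (j+k) := by
      have hsub := Finset.sum_Ico_eq_sub x (show j ≤ j+k by omega)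
      have : T (j+k) - T j = (∑ i ∈ Finset.Ico j (j+k), x i) - a * k := by
        simp only [hT]
        rw [hsub]
        push_cast; ring
      linarith
    apply hUle
    intro m h1 h2
    rcases Nat.eq_or_lt_of_le h1 with rfl | h1'
    · exact le_trans hTjk (hUge' (j+1) (j+k) (by omega))
    · exact hUge' (j+1) m h1'
  -- telescoping
  have htel : U 0 - U K = ∑ j ∈ Finset.range K, (U j - U (j+1)) := by
    have := Finset.sum_range_sub (fun j => U j) K
    -- ∑ (U (j+1) - U j) = U K - U 0
    have e : ∑ j ∈ Finset.range K, (U j - U (j+1))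
        = - ∑ j ∈ Finset.range K, (U (j+1) - U j) := by
      rw [← Finset.sum_neg_distrib]; apply Finset.sum_congr rfl; intros; ring
    rw [e, this]; ring
  have hUK : U K = U 0 + d := by
    have := hTper 0  -- not what we need; use periodic shift of U
    -- U (0 + K) = U 0 + d
    have h1 : U K ≤ U 0 + d := by
      apply hUle
      intro m hm1 hm2
      have hmK : K ≤ m := hm1
      have : T m = T (m - K) + d := by
        have := hTper (m - K)
        rw [Nat.sub_add_cancel hmK] at this
        linarith
      have h3 : T (m - K) ≤ U 0 := hmemU 0 (m - K) (by omega) (by omega)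
      linarith
    have h2 : U 0 + d ≤ U K := by
      obtain ⟨m, hm, hmax⟩ := Finset.exists_mem_eq_sup' (by simp : (Finset.Icc 0 (0+K)).Nonempty) T
      simp [Finset.mem_Icc] at hm
      have : U 0 = T m := by simpa [hU] using hmax
      rw [this]
      have : T m + d = T (m + K) := (hTper m).symm
      rw [this]
      exact hmemU K (m + K) (by omega) (by omega)
    linarith
  -- sum of descents bound
  have hbound : U 0 - U K ≤ a * (K - ((Finset.range K).filter good).card) := by
    rw [htel]
    have : ∑ j ∈ Finset.range K, (U j - U (j+1))
        ≤ ∑ j ∈ Finset.range K, (if good j then 0 else a) := by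
      apply Finset.sum_le_sum
      intro j _
      by_cases hj : good j
      · simp only [hj, if_true]; linarith [hdesc0 j hj]
      · simp only [hj, if_false]; linarith [hdesc j]
    refine le_trans this ?_
    rw [Finset.sum_ite, Finset.sum_const, Finset.sum_const]
    have hcards := Finset.card_filter_add_card_filter_not
      (s := Finset.range K) (p := good)
    simp only [Finset.card_range] at hcards
    simp only [smul_eq_mul, mul_zero, zero_add, nsmul_eq_mul]
    have : ((Finset.range K).filter (fun j => ¬ good j)).card
        = K - ((Finset.range K).filter good).card := by omega
    rw [this]
    have hle : ((Finset.range K).filter good).card ≤ K := by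
      have := Finset.card_filter_le (Finset.range K) good
      simpa using this
    push_cast [Nat.cast_sub hle]
    ring_nf
    linarith
  have : a * K - S ≤ a * (K - ((Finset.range K).filter good).card) := by
    rw [hUK] at hbound
    simp [hd] at hbound ⊢
    linarith
  nlinarith [this]

open MeasureTheory Set
open scoped ENNReal NNReal

lemma shift_sum_eq (K : ℕ) (hK : 0 < K) (f : Fin K → ℝ) (j : ℕ) (hj : j < K)
    (k : ℕ) (hk1 : 1 ≤ k) (hkK : k ≤ K) :
    ∑ i ∈ Finset.Ico j (j + k), f ⟨i % K, Nat.mod_lt _ hK⟩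
      = ∑ i ∈ Finset.Iic (⟨k - 1, by omega⟩ : Fin K), f (i + ⟨j, hj⟩) := by
  rw [Finset.sum_Ico_eq_sum_range]
  have hjk : j + k - j = k := by omega
  rw [hjk]
  refine Finset.sum_nbij' (i := fun i' => (⟨i' % K, Nat.mod_lt _ hK⟩ : Fin K))
    (j := fun i => (i : ℕ)) ?_ ?_ ?_ ?_ ?_
  · intro i' hi'
    simp only [Finset.mem_range] at hi'
    have h1 : i' % K = i' := Nat.mod_eq_of_lt (by omega)
    simp only [Finset.mem_Iic, Fin.le_def, h1]
    omega
  · intro i hi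
    simp only [Finset.mem_Iic, Fin.le_def] at hi
    simp only [Finset.mem_range]
    omega
  · intro i' hi'
    simp only [Finset.mem_range] at hi'
    simp [Nat.mod_eq_of_lt (by omega : i' < K)]
  · intro i _
    apply Fin.ext
    simp [Nat.mod_eq_of_lt i.isLt]
  · intro i' hi'
    congr 1
    apply Fin.ext
    simp only [Fin.add_def]
    simp [Nat.mod_add_mod, Nat.add_comm]

lemma lintegral_one_sub_uniform :
    ∫⁻ y in Set.Icc (0:ℝ) 1, ENNReal.ofReal (1 - y) = ENNReal.ofReal (1/2) := by
  have hint : IntegrableOn (fun y : ℝ => 1 - y) (Set.Icc 0 1) :=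
    (continuous_const.sub continuous_id).integrableOn_Icc
  have hnn : 0 ≤ᵐ[volume.restrict (Set.Icc (0:ℝ) 1)] fun y => 1 - y := by
    rw [Filter.EventuallyLE, ae_restrict_iff' measurableSet_Icc]
    filter_upwards with y hy
    simp only [Set.mem_Icc] at hy
    simp only [Pi.zero_apply]
    linarith [hy.2]
  rw [← ofReal_integral_eq_lintegral_ofReal hint hnn]
  congr 1
  rw [MeasureTheory.integral_Icc_eq_integral_Ioc,
    ← intervalIntegral.integral_of_le (zero_le_one (α := ℝ))]
  rw [intervalIntegral.integral_sub intervalIntegrable_const intervalIntegral.intervalIntegrable_id]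
  simp [integral_id]
  norm_num

/-- For exchangeable, marginally Uniform(0,1) random variables `Π_1,...,Π_K`,
`P(∃ k ≤ K : (1/k) ∑_{i=1}^k Π_i ≤ t) ≤ 1/(2(1-t))` for all `t ∈ (0,1)`. -/
theorem exchangeable_prefix_average_bound
    {Ω : Type*} [MeasurableSpace Ω] (μ : Measure Ω) [IsProbabilityMeasure μ]
    (K : ℕ) (hK : 0 < K) (P : Fin K → Ω → ℝ)
    (hmeas : ∀ k, Measurable (P k))
    (h01 : ∀ k ω, P k ω ∈ Set.Icc (0:ℝ) 1)
    (hunif : ∀ k, Measure.map (P k) μ = volume.restrict (Set.Icc (0:ℝ) 1))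
    (hexch : ∀ σ : Equiv.Perm (Fin K),
      Measure.map (fun ω => fun i => P (σ i) ω) μ
        = Measure.map (fun ω => fun i => P i ω) μ) :
    ∀ t ∈ Set.Ioo (0:ℝ) 1,
      μ {ω | ∃ k : Fin K, (∑ i ∈ Finset.Iic k, P i ω) / ((k:ℕ) + 1) ≤ t}
        ≤ ENNReal.ofReal (1 / (2 * (1 - t))) := by
  intro t ht
  classical
  haveI : NeZero K := ⟨hK.ne'⟩
  set a : ℝ := 1 - t with ha_def
  have ha : 0 < a := by simp only [ha_def]; linarith [ht.2]
  -- the joint random vector and the target Borel set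
  set Φ : Ω → (Fin K → ℝ) := fun ω i => P i ω with hΦ
  have hΦm : Measurable Φ := measurable_pi_lambda _ hmeas
  set A : Set (Fin K → ℝ) :=
    {x | ∃ k : Fin K, a * ((k:ℕ) + 1) ≤ ∑ i ∈ Finset.Iic k, (1 - x i)} with hA_def
  have hAm : MeasurableSet A := by
    have : A = ⋃ k : Fin K,
        {x : Fin K → ℝ | a * ((k:ℕ) + 1) ≤ ∑ i ∈ Finset.Iic k, (1 - x i)} := by
      ext x; simp [hA_def]
    rw [this]
    refine MeasurableSet.iUnion fun k => ?_
    exact measurableSet_le measurable_const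
      (Finset.measurable_sum _ fun i _ => measurable_const.sub (measurable_pi_apply i))
  -- the event is the preimage of A
  have hEvent : {ω | ∃ k : Fin K, (∑ i ∈ Finset.Iic k, P i ω) / ((k:ℕ) + 1) ≤ t}
      = Φ ⁻¹' A := by
    ext ω
    simp only [Set.mem_setOf_eq, Set.mem_preimage, hA_def, hΦ]
    refine exists_congr fun k => ?_
    have hkpos : (0:ℝ) < (k:ℕ) + 1 := by positivity
    have hcard : ∑ i ∈ Finset.Iic k, (1 - P i ω)
        = ((k:ℕ) + 1) - ∑ i ∈ Finset.Iic k, P i ω := by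
      rw [Finset.sum_sub_distrib, Finset.sum_const, Fin.card_Iic]
      push_cast; ring
    rw [div_le_iff₀ hkpos, hcard]
    constructor
    · intro h; simp only [ha_def]; nlinarith
    · intro h; simp only [ha_def] at h; nlinarith
  rw [hEvent]
  -- permutation invariance of the event probability
  have hperm : ∀ σ : Equiv.Perm (Fin K),
      μ (Φ ⁻¹' ((fun x : Fin K → ℝ => x ∘ σ) ⁻¹' A)) = μ (Φ ⁻¹' A) := by
    intro σ
    have hcm : Measurable (fun x : Fin K → ℝ => x ∘ σ) :=
      measurable_pi_lambda _ fun i => measurable_pi_apply _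
    have h1 : μ (Φ ⁻¹' ((fun x : Fin K → ℝ => x ∘ σ) ⁻¹' A))
        = Measure.map ((fun x : Fin K → ℝ => x ∘ σ) ∘ Φ) μ A := by
      rw [← Measure.map_map hcm hΦm, Measure.map_apply hcm hAm,
        Measure.map_apply hΦm (hcm hAm)]
    have h2 : ((fun x : Fin K → ℝ => x ∘ σ) ∘ Φ) = fun ω => fun i => P (σ i) ω := rfl
    rw [h1, h2, hexch σ, Measure.map_apply hΦm hAm]
  -- the shifted events
  set E : Fin K → Set Ω :=
    fun c => Φ ⁻¹' ((fun x : Fin K → ℝ => x ∘ Equiv.addRight c) ⁻¹' A) with hE_def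
  have hEm : ∀ c, MeasurableSet (E c) := by
    intro c
    exact hΦm ((measurable_pi_lambda _ fun i => measurable_pi_apply _) hAm)
  have hEμ : ∀ c, μ (E c) = μ (Φ ⁻¹' A) := fun c => hperm (Equiv.addRight c)
  -- pointwise description of membership in E c
  have hEmem : ∀ (j : ℕ) (hj : j < K) (ω : Ω),
      ω ∈ E ⟨j, hj⟩ ↔ ∃ k ∈ Finset.Icc 1 K,
        a * k ≤ ∑ i ∈ Finset.Ico j (j + k), (1 - P ⟨i % K, Nat.mod_lt _ hK⟩ ω) := by
    intro j hj ω
    simp only [hE_def, Set.mem_preimage, hA_def, Set.mem_setOf_eq]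
    constructor
    · rintro ⟨kf, hkf⟩
      refine ⟨(kf:ℕ) + 1, by simp [Finset.mem_Icc], ?_⟩
      rw [shift_sum_eq K hK (fun i => 1 - P i ω) j hj ((kf:ℕ)+1) (by omega) (by omega)]
      have hkfe : (⟨(kf:ℕ) + 1 - 1, by omega⟩ : Fin K) = kf := by
        apply Fin.ext; simp
      rw [hkfe]
      convert hkf using 2 <;> push_cast <;> ring_nf <;> rfl
    · rintro ⟨k, hk, hks⟩
      simp only [Finset.mem_Icc] at hk
      rw [shift_sum_eq K hK (fun i => 1 - P i ω) j hj k hk.1 hk.2] at hks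
      refine ⟨⟨k - 1, by omega⟩, ?_⟩
      convert hks using 2 <;> push_cast [Nat.cast_sub hk.1] <;> ring_nf <;> rfl
  -- count of good shifts and the deterministic bound
  set x : Ω → ℕ → ℝ := fun ω m => 1 - P ⟨m % K, Nat.mod_lt _ hK⟩ ω with hx_def
  have hxnn : ∀ ω m, 0 ≤ x ω m := by
    intro ω m
    have := (h01 ⟨m % K, Nat.mod_lt _ hK⟩ ω).2
    simp only [hx_def]; linarith
  have hxper : ∀ ω m, x ω (m + K) = x ω m := by
    intro ω m; simp [hx_def, Nat.add_mod_right]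
  set good : Ω → ℕ → Prop :=
    fun ω j => ∃ k ∈ Finset.Icc 1 K, a * k ≤ ∑ i ∈ Finset.Ico j (j + k), x ω i with hgood_def
  have hkey : ∀ ω, a * ((Finset.range K).filter (good ω)).card
      ≤ ∑ i ∈ Finset.range K, x ω i := by
    intro ω
    exact cycle_key K hK a ha (x ω) (hxnn ω) (hxper ω) (good ω) (fun j => Iff.rfl)
  -- the count as a sum of indicators
  have hcount : ∀ ω, (((Finset.range K).filter (good ω)).card : ℝ≥0∞)
      = ∑ j ∈ Finset.range K, (if h : j < K then (E ⟨j, h⟩).indicator (1 : Ω → ℝ≥0∞) ω else 0) := by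
    intro ω
    rw [Finset.card_filter]
    push_cast
    refine Finset.sum_congr rfl fun j hj => ?_
    have hjK : j < K := Finset.mem_range.mp hj
    rw [dif_pos hjK]
    by_cases h : good ω j
    · rw [if_pos h, Set.indicator_of_mem]
      · rfl
      · exact (hEmem j hjK ω).mpr h
    · rw [if_neg h, Set.indicator_of_notMem]
      intro hmem
      exact h ((hEmem j hjK ω).mp hmem)
  -- integrate
  have hsum : (K : ℝ≥0∞) * μ (Φ ⁻¹' A)
      = ∫⁻ ω, (((Finset.range K).filter (good ω)).card : ℝ≥0∞) ∂μ := by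
    have h1 : ∫⁻ ω, (((Finset.range K).filter (good ω)).card : ℝ≥0∞) ∂μ
        = ∑ j ∈ Finset.range K, ∫⁻ ω, (if h : j < K then (E ⟨j, h⟩).indicator (1 : Ω → ℝ≥0∞) ω else 0) ∂μ := by
      rw [← lintegral_finset_sum]
      · exact lintegral_congr fun ω => hcount ω
      · intro j hj
        simp only [dif_pos (Finset.mem_range.mp hj)]
        exact measurable_one.indicator (hEm _)
    rw [h1]
    have h2 : ∀ j ∈ Finset.range K,
        ∫⁻ ω, (if h : j < K then (E ⟨j, h⟩).indicator (1 : Ω → ℝ≥0∞) ω else 0) ∂μ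
          = μ (Φ ⁻¹' A) := by
      intro j hj
      have hjK : j < K := Finset.mem_range.mp hj
      simp only [dif_pos hjK]
      rw [lintegral_indicator_one (hEm _)]
      exact hEμ _
    rw [Finset.sum_congr rfl h2, Finset.sum_const, Finset.card_range, nsmul_eq_mul]
  -- bound by the sum of the X's
  have hptwise : ∀ ω, (((Finset.range K).filter (good ω)).card : ℝ≥0∞)
      ≤ (ENNReal.ofReal a)⁻¹ * ENNReal.ofReal (∑ i ∈ Finset.range K, x ω i) := by
    intro ω
    have h1 : (((Finset.range K).filter (good ω)).card : ℝ)
        ≤ a⁻¹ * ∑ i ∈ Finset.range K, x ω i := by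
      rw [le_inv_mul_iff₀ ha]
      exact hkey ω
    calc (((Finset.range K).filter (good ω)).card : ℝ≥0∞)
        = ENNReal.ofReal (((Finset.range K).filter (good ω)).card : ℝ) := by
          rw [ENNReal.ofReal_natCast]
      _ ≤ ENNReal.ofReal (a⁻¹ * ∑ i ∈ Finset.range K, x ω i) := ENNReal.ofReal_le_ofReal h1
      _ = (ENNReal.ofReal a)⁻¹ * ENNReal.ofReal (∑ i ∈ Finset.range K, x ω i) := by
          rw [ENNReal.ofReal_mul (by positivity), ENNReal.ofReal_inv_of_pos ha]
  -- each X_i has lintegral 1/2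
  have hhalf : ∀ c : Fin K, ∫⁻ ω, ENNReal.ofReal (1 - P c ω) ∂μ = ENNReal.ofReal (1/2) := by
    intro c
    have hg : Measurable fun y : ℝ => ENNReal.ofReal (1 - y) :=
      ENNReal.measurable_ofReal.comp (measurable_const.sub measurable_id)
    have := lintegral_map hg (hmeas c) (μ := μ)
    rw [hunif c] at this
    rw [← this, lintegral_one_sub_uniform]
  -- total bound
  have htotal : ∫⁻ ω, (((Finset.range K).filter (good ω)).card : ℝ≥0∞) ∂μ
      ≤ (ENNReal.ofReal a)⁻¹ * ((K : ℝ≥0∞) * ENNReal.ofReal (1/2)) := by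
    calc ∫⁻ ω, (((Finset.range K).filter (good ω)).card : ℝ≥0∞) ∂μ
        ≤ ∫⁻ ω, (ENNReal.ofReal a)⁻¹ * ENNReal.ofReal (∑ i ∈ Finset.range K, x ω i) ∂μ :=
          lintegral_mono hptwise
      _ = (ENNReal.ofReal a)⁻¹ * ∫⁻ ω, ENNReal.ofReal (∑ i ∈ Finset.range K, x ω i) ∂μ :=
          lintegral_const_mul' _ _ (by simpa using ha)
      _ ≤ (ENNReal.ofReal a)⁻¹ * ((K : ℝ≥0∞) * ENNReal.ofReal (1/2)) := by
          gcongr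
          have hsplit : ∀ ω, ENNReal.ofReal (∑ i ∈ Finset.range K, x ω i)
              = ∑ i ∈ Finset.range K, ENNReal.ofReal (x ω i) := by
            intro ω
            exact ENNReal.ofReal_sum_of_nonneg fun i _ => hxnn ω i
          rw [lintegral_congr hsplit, lintegral_finset_sum]
          · have : ∀ i ∈ Finset.range K, ∫⁻ ω, ENNReal.ofReal (x ω i) ∂μ
                = ENNReal.ofReal (1/2) := by
              intro i _
              exact hhalf _
            rw [Finset.sum_congr rfl this, Finset.sum_const, Finset.card_range, nsmul_eq_mul]
          · intro i _
            exact ENNReal.measurable_ofReal.comp (measurable_const.sub (hmeas _))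
  -- conclude
  have hfinal : (K : ℝ≥0∞) * μ (Φ ⁻¹' A)
      ≤ (K : ℝ≥0∞) * ((ENNReal.ofReal a)⁻¹ * ENNReal.ofReal (1/2)) := by
    rw [hsum]
    calc _ ≤ (ENNReal.ofReal a)⁻¹ * ((K : ℝ≥0∞) * ENNReal.ofReal (1/2)) := htotal
      _ = (K : ℝ≥0∞) * ((ENNReal.ofReal a)⁻¹ * ENNReal.ofReal (1/2)) := by ring
  have hKne : (K : ℝ≥0∞) ≠ 0 := by exact_mod_cast hK.ne'
  have hμle : μ (Φ ⁻¹' A) ≤ (ENNReal.ofReal a)⁻¹ * ENNReal.ofReal (1/2) :=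
    (ENNReal.mul_le_mul_iff_right hKne (by simp)).mp hfinal
  refine le_trans hμle (le_of_eq ?_)
  rw [← ENNReal.ofReal_inv_of_pos ha, ← ENNReal.ofReal_mul (by positivity)]
  congr 1
  rw [eq_div_iff (by positivity : (2:ℝ) * a ≠ 0)]
  field_simp
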